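/- The elements Ř_i(ξ) = s_i + 1/ξ of ℂ[S_k] satisfy the parameter-dependent braid relation: Ř_i(ξ_{i+1} − ξ_{i+2}) Ř_{i+1}(ξ_i − ξ_{i+2}) Ř_i(ξ_i − ξ_{i+1}) = Ř_{i+1}(ξ_i − ξ_{i+1}) Ř_i(ξ_i − ξ_{i+2}) Ř_{i+1}(ξ_{i+1} − ξ_{i+2}) for all complex spectral parameters ξ_i, ξ_{i+1}, ξ_{i+2} with pairwise distinct values. -/

import Mathlib

/-- The Baxterized element `Ř_i(ξ) = s_i + 1/ξ` of the group algebra `ℂ[S_k]`, where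
`s_i` is the simple transposition exchanging the (0-indexed) positions `i` and `i+1`.
(Junk value `1` for out-of-range indices, which never occur below.) -/
noncomputable def Rh (k : ℕ) (i : ℕ) (ξ : ℂ) : MonoidAlgebra ℂ (Equiv.Perm (Fin k)) :=
  if h : i + 1 < k then
    MonoidAlgebra.single (Equiv.swap ⟨i, by omega⟩ ⟨i + 1, h⟩) 1 + ξ⁻¹ • 1
  else 1

/-- Abstract parameter-dependent braid relation: if `S`, `T` are involutions satisfying the
braid relation and the scalars satisfy `y(x+z) = xz`, then the Baxterized braid relation holds. -/
lemma braid_aux {A : Type*} [Ring A] [Algebra ℂ A] (S T : A) (x y z : ℂ)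
    (hS : S * S = 1) (hT : T * T = 1) (hB : S * T * S = T * S * T)
    (hxyz : y * (x + z) = x * z) :
    (S + x • 1) * (T + y • 1) * (S + z • 1) = (T + z • 1) * (S + y • 1) * (T + x • 1) := by
  simp only [mul_add, add_mul, smul_mul_assoc, mul_smul_comm, smul_smul, mul_one, one_mul,
    hS, hT, hB]
  match_scalars <;>
    first
      | linear_combination hxyz
      | linear_combination -hxyz
      | linear_combination 2 * hxyz
      | linear_combination (-2 : ℂ) * hxyz
      | ring

/-- The elements `Ř_i(ξ) = s_i + 1/ξ` of `ℂ[S_k]` satisfy the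
parameter-dependent braid relation
`Ř_i(ξ_{i+1} − ξ_{i+2}) Ř_{i+1}(ξ_i − ξ_{i+2}) Ř_i(ξ_i − ξ_{i+1})
 = Ř_{i+1}(ξ_i − ξ_{i+1}) Ř_i(ξ_i − ξ_{i+2}) Ř_{i+1}(ξ_{i+1} − ξ_{i+2})`
for pairwise distinct spectral parameters. -/
theorem statement11 (k : ℕ) (i : ℕ) (hik : i + 2 < k)
    (a b c : ℂ) (hab : a ≠ b) (hac : a ≠ c) (hbc : b ≠ c) :
    Rh k i (b - c) * Rh k (i + 1) (a - c) * Rh k i (a - b) =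
      Rh k (i + 1) (a - b) * Rh k i (a - c) * Rh k (i + 1) (b - c) := by
  have h1 : i + 1 < k := by omega
  have h2 : i + 1 + 1 < k := by omega
  set u : Fin k := ⟨i, by omega⟩
  set v : Fin k := ⟨i + 1, by omega⟩
  set w : Fin k := ⟨i + 2, by omega⟩
  have huv : u ≠ v := by simp [u, v, Fin.ext_iff]
  have huw : u ≠ w := by simp [u, w, Fin.ext_iff]
  have hvw : v ≠ w := by simp [v, w, Fin.ext_iff]
  have hw : (⟨i + 1 + 1, h2⟩ : Fin k) = w := by simp [w, Fin.ext_iff]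
  simp only [Rh, dif_pos h1, dif_pos h2, hw]
  set S : MonoidAlgebra ℂ (Equiv.Perm (Fin k)) := MonoidAlgebra.single (Equiv.swap u v) 1
  set T : MonoidAlgebra ℂ (Equiv.Perm (Fin k)) := MonoidAlgebra.single (Equiv.swap v w) 1
  have hS : S * S = 1 := by
    simp [S, MonoidAlgebra.single_mul_single, Equiv.swap_mul_self, MonoidAlgebra.one_def]
  have hT : T * T = 1 := by
    simp [T, MonoidAlgebra.single_mul_single, Equiv.swap_mul_self, MonoidAlgebra.one_def]
  have hB : S * T * S = T * S * T := by
    simp only [S, T, MonoidAlgebra.single_mul_single, mul_one]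
    congr 1
    calc Equiv.swap u v * Equiv.swap v w * Equiv.swap u v
        = Equiv.swap v u * Equiv.swap w v * Equiv.swap v u := by
          rw [Equiv.swap_comm u v, Equiv.swap_comm v w]
      _ = Equiv.swap u w := Equiv.swap_mul_swap_mul_swap hvw.symm huw.symm
      _ = Equiv.swap w u := Equiv.swap_comm u w
      _ = Equiv.swap v w * Equiv.swap u v * Equiv.swap v w :=
          (Equiv.swap_mul_swap_mul_swap huv huw).symm
  have hxyz : (a - c)⁻¹ * ((b - c)⁻¹ + (a - b)⁻¹) = (b - c)⁻¹ * (a - b)⁻¹ := by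
    have h1 : a - b ≠ 0 := sub_ne_zero.mpr hab
    have h2 : a - c ≠ 0 := sub_ne_zero.mpr hac
    have h3 : b - c ≠ 0 := sub_ne_zero.mpr hbc
    field_simp
    ring
  exact braid_aux S T (b - c)⁻¹ (a - c)⁻¹ (a - b)⁻¹ hS hT hB hxyz
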